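/- Let ρ be the ReLU. Fix an architecture (L,(N_0,…,N_L)), nonnegative scalars λ_1,…,λ_L, ε ≥ 0, and let s = min_ℓ N_ℓ. Define θ by W_ℓ = λ_ℓ I_{N_ℓ×N_{ℓ−1}} (rectangular identity), b_ℓ = 0, and θ' by W'_ℓ = (1+ε)W_ℓ, b'_ℓ = 0. Then for any input x ∈ ℝ^{N_0} with nonnegative entries supported on the first s coordinates, and any q ∈ [1,∞], one has ‖R_θ(x) − R_{θ'}(x)‖_q = ((1+ε)^L − 1) · (∏_{ℓ=1}^L λ_ℓ) · ‖x‖_q. -/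

import Mathlib

open scoped ENNReal BigOperators

noncomputable section

def relu (x : ℝ) : ℝ := max 0 x

def hiddenLayer (N : ℕ → ℕ) (W : ∀ ℓ : ℕ, Matrix (Fin (N (ℓ + 1))) (Fin (N ℓ)) ℝ)
    (b : ∀ ℓ : ℕ, Fin (N (ℓ + 1)) → ℝ) : (ℓ : ℕ) → (Fin (N 0) → ℝ) → Fin (N ℓ) → ℝ
  | 0, x => x
  | ℓ + 1, x => fun i => relu ((W ℓ).mulVec (hiddenLayer N W b ℓ x) i + b ℓ i)

def realization (N : ℕ → ℕ) (W : ∀ ℓ : ℕ, Matrix (Fin (N (ℓ + 1))) (Fin (N ℓ)) ℝ)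
    (b : ∀ ℓ : ℕ, Fin (N (ℓ + 1)) → ℝ) (L : ℕ) (x : Fin (N 0) → ℝ) : Fin (N L) → ℝ :=
  match L with
  | 0 => x
  | ℓ + 1 => (W ℓ).mulVec (hiddenLayer N W b ℓ x) + b ℓ

def qnorm (q : ℝ≥0∞) [Fact (1 ≤ q)] {n : ℕ} (x : Fin n → ℝ) : ℝ :=
  ‖(WithLp.equiv q (Fin n → ℝ)).symm x‖

def opqnorm (q : ℝ≥0∞) [Fact (1 ≤ q)] {m n : ℕ} (M : Matrix (Fin m) (Fin n) ℝ) : ℝ :=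
  sInf {c : ℝ | 0 ≤ c ∧ ∀ x : Fin n → ℝ, qnorm q (M.mulVec x) ≤ c * qnorm q x}

def rectId (m n : ℕ) : Matrix (Fin m) (Fin n) ℝ :=
  Matrix.of fun i j => if (i : ℕ) = (j : ℕ) then 1 else 0

lemma rectId_mulVec {m n : ℕ} (v : Fin n → ℝ) (i : Fin m) :
    (rectId m n).mulVec v i = if h : (i : ℕ) < n then v ⟨i, h⟩ else 0 := by
  unfold rectId Matrix.mulVec dotProduct
  by_cases h : (i : ℕ) < n
  · rw [dif_pos h]
    rw [Finset.sum_eq_single (⟨(i : ℕ), h⟩ : Fin n)]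
    · simp
    · intro j _ hj
      have : (i : ℕ) ≠ (j : ℕ) := by
        intro he; apply hj; exact Fin.ext he.symm
      simp [this]
    · simp
  · rw [dif_neg h]
    apply Finset.sum_eq_zero
    intro j _
    have : (i : ℕ) ≠ (j : ℕ) := by
      intro he; exact h (he ▸ j.isLt)
    simp [this]

lemma qnorm_smul (q : ℝ≥0∞) [Fact (1 ≤ q)] {n : ℕ} (a : ℝ) (v : Fin n → ℝ) :
    qnorm q (a • v) = |a| * qnorm q v := by
  unfold qnorm
  rw [WithLp.equiv_symm_apply, WithLp.toLp_smul, norm_smul, Real.norm_eq_abs]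

lemma qnorm_congr_supported (q : ℝ≥0∞) [Fact (1 ≤ q)] {m n s : ℕ} (hm : s ≤ m) (hn : s ≤ n)
    (g : ℕ → ℝ) (hg : ∀ k, s ≤ k → g k = 0) :
    qnorm q (fun i : Fin m => g i) = qnorm q (fun i : Fin n => g i) := by
  have hq1 : 1 ≤ q := Fact.out
  unfold qnorm
  by_cases hqt : q = ⊤
  · subst hqt
    rw [PiLp.norm_eq_ciSup, PiLp.norm_eq_ciSup]
    simp only [WithLp.equiv_symm_apply, PiLp.toLp_apply]
    have key : ∀ (a b : ℕ), s ≤ a → s ≤ b →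
        (⨆ i : Fin a, ‖g i‖) ≤ ⨆ i : Fin b, ‖g i‖ := by
      intro a b ha hb
      apply Real.iSup_le _ (Real.iSup_nonneg fun i => norm_nonneg _)
      intro i
      by_cases his : (i : ℕ) < s
      · exact le_ciSup (f := fun j : Fin b => ‖g (j : ℕ)‖)
          (Set.Finite.bddAbove (Set.finite_range _))
          (⟨(i : ℕ), lt_of_lt_of_le his hb⟩ : Fin b)
      · rw [hg i (le_of_not_gt his)]
        simpa using Real.iSup_nonneg (f := fun j : Fin b => ‖g (j : ℕ)‖)
          fun j => norm_nonneg _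
    exact le_antisymm (key m n hm hn) (key n m hn hm)
  · have ht : 0 < q.toReal := ENNReal.toReal_pos (by positivity) hqt
    rw [PiLp.norm_eq_sum ht, PiLp.norm_eq_sum ht]
    simp only [WithLp.equiv_symm_apply, PiLp.toLp_apply]
    congr 1
    have key : ∀ (a : ℕ), s ≤ a →
        (∑ i : Fin a, ‖g i‖ ^ q.toReal) = ∑ i ∈ Finset.range s, ‖g i‖ ^ q.toReal := by
      intro a ha
      rw [Fin.sum_univ_eq_sum_range (fun i => ‖g i‖ ^ q.toReal)]
      symm
      apply Finset.sum_subset (Finset.range_subset_range.mpr ha)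
      intro k _ hk
      rw [Finset.mem_range, not_lt] at hk
      rw [hg k hk]
      simp [Real.zero_rpow (ne_of_gt ht)]
    rw [key m hm, key n hn]

lemma hidden_eq (N : ℕ → ℕ) (L : ℕ) (s : ℕ) (hsN : ∀ ℓ, ℓ ≤ L → s ≤ N ℓ)
    (c : ℕ → ℝ) (hc : ∀ k, 0 ≤ c k) (x : Fin (N 0) → ℝ)
    (g : ℕ → ℝ) (hgx : ∀ i : Fin (N 0), g (i : ℕ) = x i)
    (hg0 : ∀ k, s ≤ k → g k = 0) (hgpos : ∀ k, 0 ≤ g k) :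
    ∀ ℓ, ℓ ≤ L → ∀ i : Fin (N ℓ),
      hiddenLayer N (fun k => c k • rectId (N (k + 1)) (N k)) (fun k => 0) ℓ x i
        = (∏ k ∈ Finset.range ℓ, c k) * g (i : ℕ) := by
  intro ℓ
  induction ℓ with
  | zero => intro _ i; simp [hiddenLayer, hgx]
  | succ ℓ ih =>
    intro hℓ i
    have hℓ' : ℓ ≤ L := le_trans (Nat.le_succ ℓ) hℓ
    show relu (((c ℓ • rectId (N (ℓ + 1)) (N ℓ)).mulVec
        (hiddenLayer N (fun k => c k • rectId (N (k + 1)) (N k)) (fun k => 0) ℓ x)) i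
        + (0 : Fin (N (ℓ + 1)) → ℝ) i) = _
    rw [Matrix.smul_mulVec, Pi.zero_apply, add_zero, Pi.smul_apply, smul_eq_mul,
      rectId_mulVec]
    by_cases h : (i : ℕ) < N ℓ
    · rw [dif_pos h, ih hℓ' ⟨(i : ℕ), h⟩]
      have hnn : 0 ≤ c ℓ * ((∏ k ∈ Finset.range ℓ, c k) * g (i : ℕ)) :=
        mul_nonneg (hc ℓ) (mul_nonneg (Finset.prod_nonneg fun k _ => hc k) (hgpos _))
      rw [relu, max_eq_right hnn, Finset.prod_range_succ]
      ring
    · rw [dif_neg h]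
      have hgi : g (i : ℕ) = 0 := hg0 _ (le_trans (hsN ℓ hℓ') (le_of_not_gt h))
      simp [relu, hgi]

lemma realization_eq (N : ℕ → ℕ) (L : ℕ) (hL : 1 ≤ L) (s : ℕ) (hsN : ∀ ℓ, ℓ ≤ L → s ≤ N ℓ)
    (c : ℕ → ℝ) (hc : ∀ k, 0 ≤ c k) (x : Fin (N 0) → ℝ)
    (g : ℕ → ℝ) (hgx : ∀ i : Fin (N 0), g (i : ℕ) = x i)
    (hg0 : ∀ k, s ≤ k → g k = 0) (hgpos : ∀ k, 0 ≤ g k) :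
    ∀ i : Fin (N L),
      realization N (fun k => c k • rectId (N (k + 1)) (N k)) (fun k => 0) L x i
        = (∏ k ∈ Finset.range L, c k) * g (i : ℕ) := by
  obtain ⟨m, rfl⟩ : ∃ m, L = m + 1 := ⟨L - 1, (Nat.succ_pred_eq_of_pos hL).symm⟩
  intro i
  show ((c m • rectId (N (m + 1)) (N m)).mulVec
      (hiddenLayer N (fun k => c k • rectId (N (k + 1)) (N k)) (fun k => 0) m x)
      + (0 : Fin (N (m + 1)) → ℝ)) i = _
  rw [Pi.add_apply, Pi.zero_apply, add_zero, Matrix.smul_mulVec, Pi.smul_apply,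
    smul_eq_mul, rectId_mulVec]
  have hm : m ≤ m + 1 := Nat.le_succ m
  by_cases h : (i : ℕ) < N m
  · rw [dif_pos h, hidden_eq N (m + 1) s hsN c hc x g hgx hg0 hgpos m hm ⟨(i : ℕ), h⟩,
      Finset.prod_range_succ]
    ring
  · rw [dif_neg h]
    have hgi : g (i : ℕ) = 0 := hg0 _ (le_trans (hsN m hm) (le_of_not_gt h))
    simp [hgi]

/-- Equality case of the perturbation bound: with `W_ℓ = λ_ℓ I` (rectangular
identity), `W'_ℓ = (1+ε) W_ℓ`, zero biases, and a nonnegative input supported on the first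
`s = min_ℓ N_ℓ` coordinates, the difference of realizations has `q`-norm exactly
`((1+ε)^L − 1) (∏ λ_ℓ) ‖x‖_q`. -/
theorem relu_network_perturbation_equality (q : ℝ≥0∞) [Fact (1 ≤ q)]
    (N : ℕ → ℕ) (L : ℕ) (hL : 1 ≤ L)
    (lam : ℕ → ℝ) (hlam : ∀ ℓ, 0 ≤ lam ℓ) (ε : ℝ) (hε : 0 ≤ ε)
    (s : ℕ) (hs : s = (Finset.range (L + 1)).inf' (Finset.nonempty_range_iff.mpr (Nat.succ_ne_zero L)) N)
    (x : Fin (N 0) → ℝ) (hx : ∀ i, 0 ≤ x i) (hxs : ∀ i : Fin (N 0), s ≤ (i : ℕ) → x i = 0) :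
    qnorm q
        (realization N (fun ℓ => lam ℓ • rectId (N (ℓ + 1)) (N ℓ)) (fun ℓ => 0) L x -
          realization N (fun ℓ => ((1 + ε) * lam ℓ) • rectId (N (ℓ + 1)) (N ℓ)) (fun ℓ => 0) L x) =
      ((1 + ε) ^ L - 1) * (∏ ℓ ∈ Finset.range L, lam ℓ) * qnorm q x := by
  set g : ℕ → ℝ := fun k => if h : k < N 0 then x ⟨k, h⟩ else 0 with hg
  have hgx : ∀ i : Fin (N 0), g (i : ℕ) = x i := fun i => by simp [hg, i.isLt]
  have hg0 : ∀ k, s ≤ k → g k = 0 := by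
    intro k hk
    by_cases h : k < N 0
    · simp [hg, h, hxs ⟨k, h⟩ hk]
    · simp [hg, h]
  have hgpos : ∀ k, 0 ≤ g k := by
    intro k; by_cases h : k < N 0 <;> simp [hg, h]
    exact hx _
  have hsN : ∀ ℓ, ℓ ≤ L → s ≤ N ℓ := by
    intro ℓ hℓ; rw [hs]
    exact Finset.inf'_le N (Finset.mem_range.mpr (Nat.lt_succ_of_le hℓ))
  have hc2 : ∀ k, 0 ≤ (1 + ε) * lam k := fun k => mul_nonneg (by linarith) (hlam k)
  set P := ∏ ℓ ∈ Finset.range L, lam ℓ with hP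
  have hPnn : 0 ≤ P := Finset.prod_nonneg fun k _ => hlam k
  have hprod2 : (∏ k ∈ Finset.range L, (1 + ε) * lam k) = (1 + ε) ^ L * P := by
    rw [Finset.prod_mul_distrib, Finset.prod_const, Finset.card_range]
  have h1 : (1 : ℝ) ≤ (1 + ε) ^ L := one_le_pow₀ (by linarith)
  have hdiff : (realization N (fun ℓ => lam ℓ • rectId (N (ℓ + 1)) (N ℓ)) (fun ℓ => 0) L x -
      realization N (fun ℓ => ((1 + ε) * lam ℓ) • rectId (N (ℓ + 1)) (N ℓ)) (fun ℓ => 0) L x)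
      = (P - (1 + ε) ^ L * P) • (fun i : Fin (N L) => g (i : ℕ)) := by
    funext i
    rw [Pi.sub_apply, realization_eq N L hL s hsN lam hlam x g hgx hg0 hgpos i,
      realization_eq N L hL s hsN (fun k => (1 + ε) * lam k) hc2 x g hgx hg0 hgpos i, hprod2]
    simp only [Pi.smul_apply, smul_eq_mul]
    ring
  rw [hdiff, qnorm_smul,
    qnorm_congr_supported q (hsN L le_rfl) (hsN 0 (Nat.zero_le L)) g hg0]
  have hgxfun : (fun i : Fin (N 0) => g (i : ℕ)) = x := funext hgx
  rw [hgxfun, abs_of_nonpos (by nlinarith)]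
  ring
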